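/- There exists an absolute constant C such that for all x ≥ 1, Σ_{r > x} 1/(r·φ(r)) ≤ C/x, where the sum is over integers r > x and φ is Euler's totient function. -/

import Mathlib

open Finset
open scoped ENNReal

namespace Stmt4Aux

/-- `1/k` as `ℝ≥0∞` from a nonzero natural. -/
lemma nat_inv_ofReal {k : ℕ} (hk : k ≠ 0) :
    ((k : ℝ≥0∞))⁻¹ = ENNReal.ofReal ((k : ℝ))⁻¹ := by
  have hk' : (0:ℝ) < k := by exact_mod_cast Nat.pos_of_ne_zero hk
  rw [ENNReal.ofReal_inv_of_pos hk', ENNReal.ofReal_natCast]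

/-- Tail bound: the sum of `1/m²` over naturals `m > y` is at most `2/y`. -/
lemma tail_bound {y : ℝ} (hy : 0 < y) :
    ∑' m : ℕ, (if y < (m : ℝ) then ((m : ℝ≥0∞) ^ 2)⁻¹ else 0) ≤ ENNReal.ofReal (2 / y) := by
  classical
  rw [ENNReal.tsum_eq_iSup_sum]
  refine iSup_le fun s => ?_
  have h1 : ∑ m ∈ s, (if y < (m : ℝ) then ((m : ℝ≥0∞) ^ 2)⁻¹ else 0)
      = ∑ m ∈ s.filter (fun m : ℕ => y < (m : ℝ)), ((m : ℝ≥0∞) ^ 2)⁻¹ :=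
    (Finset.sum_filter _ _).symm
  have h2 : ∀ m ∈ s.filter (fun m : ℕ => y < (m : ℝ)),
      ((m : ℝ≥0∞) ^ 2)⁻¹ = ENNReal.ofReal (((m : ℝ) ^ 2)⁻¹) := by
    intro m hm
    simp only [Finset.mem_filter] at hm
    have hm0 : m ≠ 0 := by
      rintro rfl; simp only [Nat.cast_zero] at hm; linarith [hm.2]
    rw [← Nat.cast_pow, nat_inv_ofReal (by positivity)]
    norm_cast
  rw [h1, Finset.sum_congr rfl h2, ← ENNReal.ofReal_sum_of_nonneg (fun i _ => by positivity)]
  apply ENNReal.ofReal_le_ofReal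
  set k := Nat.floor y with hk
  have hsub : s.filter (fun m : ℕ => y < (m : ℝ)) ⊆ Finset.Ioo k (s.sup id + 1) := by
    intro m hm
    simp only [Finset.mem_filter] at hm
    rw [Finset.mem_Ioo]
    exact ⟨(Nat.floor_lt hy.le).2 hm.2, Nat.lt_succ_of_le (Finset.le_sup (f := id) hm.1)⟩
  calc ∑ m ∈ s.filter (fun m : ℕ => y < (m : ℝ)), ((m : ℝ) ^ 2)⁻¹
      ≤ ∑ m ∈ Finset.Ioo k (s.sup id + 1), ((m : ℝ) ^ 2)⁻¹ :=
        Finset.sum_le_sum_of_subset_of_nonneg hsub (fun i _ _ => by positivity)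
    _ ≤ 2 / ((k : ℝ) + 1) := sum_Ioo_inv_sq_le k _
    _ ≤ 2 / y := by
        gcongr
        exact (Nat.lt_floor_add_one y).le

/-- Key pointwise inequality, real version: `1/(nφ(n)) ≤ Σ_{d∣n} 1/(φ(d)n²)`. -/
lemma key_real {n : ℕ} (hn : n ≠ 0) :
    ((n : ℝ) * n.totient)⁻¹ ≤ ∑ d ∈ n.divisors, ((d.totient : ℝ) * (n : ℝ) ^ 2)⁻¹ := by
  have hn' : (0:ℝ) < n := by exact_mod_cast Nat.pos_of_ne_zero hn
  have hφn : 0 < n.totient := Nat.totient_pos.2 (Nat.pos_of_ne_zero hn)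
  have hφn' : (0:ℝ) < n.totient := by exact_mod_cast hφn
  have step : ∀ d ∈ n.divisors,
      (((n / d : ℕ).totient : ℝ)) / ((n.totient : ℝ) * (n : ℝ) ^ 2)
        ≤ ((d.totient : ℝ) * (n : ℝ) ^ 2)⁻¹ := by
    intro d hd
    rw [Nat.mem_divisors] at hd
    have hd0 : d ≠ 0 := by rintro rfl; exact hn (zero_dvd_iff.mp hd.1)
    have hφd : 0 < d.totient := Nat.totient_pos.2 (Nat.pos_of_ne_zero hd0)
    have hφd' : (0:ℝ) < d.totient := by exact_mod_cast hφd
    have hmul : d.totient * (n / d).totient ≤ n.totient := by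
      have h := Nat.totient_super_multiplicative d (n / d)
      rwa [Nat.mul_div_cancel' hd.1] at h
    have hmul' : (d.totient : ℝ) * ((n / d : ℕ).totient : ℝ) ≤ (n.totient : ℝ) := by
      exact_mod_cast hmul
    rw [inv_eq_one_div, div_le_div_iff₀ (by positivity) (by positivity)]
    nlinarith [sq_nonneg (n : ℝ), hφd', hφn', hn']
  calc ((n : ℝ) * n.totient)⁻¹
      = (∑ d ∈ n.divisors, ((n / d : ℕ).totient : ℝ)) / ((n.totient : ℝ) * (n : ℝ) ^ 2) := by
        have hs : (∑ d ∈ n.divisors, ((n / d : ℕ).totient : ℝ)) = (n : ℝ) := by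
          rw [← Nat.cast_sum]
          norm_cast
          rw [Nat.sum_div_divisors n Nat.totient, Nat.sum_totient]
        rw [hs]
        field_simp
    _ = ∑ d ∈ n.divisors, ((n / d : ℕ).totient : ℝ) / ((n.totient : ℝ) * (n : ℝ) ^ 2) :=
        Finset.sum_div _ _ _
    _ ≤ ∑ d ∈ n.divisors, ((d.totient : ℝ) * (n : ℝ) ^ 2)⁻¹ := Finset.sum_le_sum step

/-- Key pointwise inequality, `ℝ≥0∞` version. -/
lemma key {n : ℕ} (hn : n ≠ 0) :
    ((n : ℝ≥0∞) * n.totient)⁻¹ ≤ ∑ d ∈ n.divisors, ((d.totient : ℝ≥0∞) * (n : ℝ≥0∞) ^ 2)⁻¹ := by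
  have hφ : ∀ d ∈ n.divisors, d.totient ≠ 0 := by
    intro d hd
    rw [Nat.mem_divisors] at hd
    have hd0 : d ≠ 0 := by rintro rfl; exact hn (zero_dvd_iff.mp hd.1)
    exact (Nat.totient_pos.2 (Nat.pos_of_ne_zero hd0)).ne'
  have hφn : n.totient ≠ 0 := (Nat.totient_pos.2 (Nat.pos_of_ne_zero hn)).ne'
  have hL : ((n : ℝ≥0∞) * n.totient)⁻¹ = ENNReal.ofReal (((n : ℝ) * n.totient)⁻¹) := by
    rw [show ((n : ℝ≥0∞) * n.totient) = ((n * n.totient : ℕ) : ℝ≥0∞) by push_cast; ring,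
      nat_inv_ofReal (by positivity)]
    push_cast
    ring_nf
  have hR : ∀ d ∈ n.divisors, ((d.totient : ℝ≥0∞) * (n : ℝ≥0∞) ^ 2)⁻¹
      = ENNReal.ofReal (((d.totient : ℝ) * (n : ℝ) ^ 2)⁻¹) := by
    intro d hd
    rw [show ((d.totient : ℝ≥0∞) * (n : ℝ≥0∞) ^ 2) = ((d.totient * n ^ 2 : ℕ) : ℝ≥0∞) by
        push_cast; ring,
      nat_inv_ofReal (by have := hφ d hd; positivity)]
    push_cast
    ring_nf
  rw [hL, Finset.sum_congr rfl hR,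
    ← ENNReal.ofReal_sum_of_nonneg (fun i _ => by positivity)]
  exact ENNReal.ofReal_le_ofReal (key_real hn)

/-- Interchange: a sum over `n` of sums over divisors of `n` equals a double sum. -/
lemma swap_divisors (H : ℕ → ℕ → ℝ≥0∞) :
    ∑' n : ℕ, (∑ d ∈ n.divisors, H d (n / d))
      = ∑' d : ℕ, ∑' m : ℕ, (if 1 ≤ d ∧ 1 ≤ m then H d m else 0) := by
  classical
  have step1 : ∀ n : ℕ, (∑ d ∈ n.divisors, H d (n / d))
      = ∑' d : ℕ, ∑' m : ℕ, (if n = d * m ∧ 1 ≤ d ∧ 1 ≤ m then H d m else 0) := by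
    intro n
    have inner : ∀ d : ℕ, (∑' m : ℕ, (if n = d * m ∧ 1 ≤ d ∧ 1 ≤ m then H d m else 0))
        = if d ∈ n.divisors then H d (n / d) else 0 := by
      intro d
      by_cases hd : d ∈ n.divisors
      · rw [Nat.mem_divisors] at hd
        have hd0 : d ≠ 0 := by rintro rfl; exact hd.2 (zero_dvd_iff.mp hd.1)
        have hn0 : n ≠ 0 := hd.2
        rw [if_pos (Nat.mem_divisors.mpr hd)]
        rw [tsum_eq_single (n / d) ?_]
        · rw [if_pos]
          refine ⟨(Nat.mul_div_cancel' hd.1).symm, Nat.one_le_iff_ne_zero.2 hd0, ?_⟩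
          exact Nat.div_pos (Nat.le_of_dvd (Nat.pos_of_ne_zero hn0) hd.1)
            (Nat.pos_of_ne_zero hd0)
        · intro m hm
          rw [if_neg]
          rintro ⟨h1, -, -⟩
          exact hm (by rw [h1, Nat.mul_div_cancel_left m (Nat.pos_of_ne_zero hd0)])
      · rw [if_neg hd]
        have hz : ∀ m : ℕ, (if n = d * m ∧ 1 ≤ d ∧ 1 ≤ m then H d m else 0) = 0 := by
          intro m
          rw [if_neg]
          rintro ⟨h1, h2, h3⟩
          exact hd (Nat.mem_divisors.mpr ⟨Dvd.intro m h1.symm, by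
            rw [h1]; exact Nat.mul_ne_zero (by omega) (by omega)⟩)
        simp [hz]
    rw [tsum_congr inner, tsum_eq_sum (s := n.divisors) (fun b hb => if_neg hb)]
    exact Finset.sum_congr rfl (fun d hd => (if_pos hd).symm)
  rw [tsum_congr step1, ENNReal.tsum_comm]
  refine tsum_congr fun d => ?_
  rw [ENNReal.tsum_comm]
  refine tsum_congr fun m => ?_
  by_cases hdm : 1 ≤ d ∧ 1 ≤ m
  · simp only [hdm, and_true, if_true]
    exact tsum_ite_eq (d * m) (fun _ => H d m)
  · simp [hdm]

/-- `Σ_{m ≥ 1} 1/m² ≤ 4` (crude). -/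
lemma sum_one_div_sq : ∑' m : ℕ, (if 1 ≤ m then ((m : ℝ≥0∞) ^ 2)⁻¹ else 0)
    ≤ ENNReal.ofReal 4 := by
  have h : ∀ m : ℕ, (if 1 ≤ m then ((m : ℝ≥0∞) ^ 2)⁻¹ else 0)
      = (if (1/2 : ℝ) < (m : ℝ) then ((m : ℝ≥0∞) ^ 2)⁻¹ else 0) := by
    intro m
    rcases Nat.eq_zero_or_pos m with rfl | hm
    · norm_num
    · have hm' : 1 ≤ m := hm
      have hmr : (1:ℝ) ≤ (m:ℝ) := by exact_mod_cast hm
      rw [if_pos hm', if_pos (by linarith : (1/2:ℝ) < (m:ℝ))]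
  rw [tsum_congr h]
  have := tail_bound (y := 1/2) (by norm_num)
  norm_num at this ⊢
  exact this

/-- `Σ_{d ≥ 1} 1/(d·φ(d)) ≤ 16`. -/
lemma sum_inv_mul_totient :
    ∑' d : ℕ, (if 1 ≤ d then ((d : ℝ≥0∞) * d.totient)⁻¹ else 0) ≤ ENNReal.ofReal 16 := by
  classical
  have step1 : ∀ d : ℕ, (if 1 ≤ d then ((d : ℝ≥0∞) * d.totient)⁻¹ else 0)
      ≤ ∑ e ∈ d.divisors, (((e : ℝ≥0∞) * ((d / e : ℕ) : ℝ≥0∞)) ^ 2)⁻¹ := by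
    intro d
    by_cases hd : 1 ≤ d
    · rw [if_pos hd]
      have hd0 : d ≠ 0 := by omega
      calc ((d : ℝ≥0∞) * d.totient)⁻¹
          ≤ ∑ e ∈ d.divisors, ((e.totient : ℝ≥0∞) * (d : ℝ≥0∞) ^ 2)⁻¹ := key hd0
        _ ≤ ∑ e ∈ d.divisors, (((e : ℝ≥0∞) * ((d / e : ℕ) : ℝ≥0∞)) ^ 2)⁻¹ := by
            refine Finset.sum_le_sum fun e he => ?_
            rw [Nat.mem_divisors] at he
            have hmul : (e : ℝ≥0∞) * ((d / e : ℕ) : ℝ≥0∞) = (d : ℝ≥0∞) := by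
              rw [← Nat.cast_mul, Nat.mul_div_cancel' he.1]
            rw [hmul]
            apply ENNReal.inv_le_inv.2
            have hφ : (1 : ℝ≥0∞) ≤ e.totient := by
              have he0 : e ≠ 0 := by rintro rfl; exact he.2 (zero_dvd_iff.mp he.1)
              exact_mod_cast Nat.one_le_iff_ne_zero.2
                (Nat.totient_pos.2 (Nat.pos_of_ne_zero he0)).ne'
            calc (d : ℝ≥0∞) ^ 2 = 1 * (d : ℝ≥0∞) ^ 2 := (one_mul _).symm
              _ ≤ (e.totient : ℝ≥0∞) * (d : ℝ≥0∞) ^ 2 := by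
                  exact mul_le_mul_left hφ _
    · rw [if_neg hd]
      exact zero_le
  calc ∑' d : ℕ, (if 1 ≤ d then ((d : ℝ≥0∞) * d.totient)⁻¹ else 0)
      ≤ ∑' d : ℕ, ∑ e ∈ d.divisors, (((e : ℝ≥0∞) * ((d / e : ℕ) : ℝ≥0∞)) ^ 2)⁻¹ :=
        ENNReal.tsum_le_tsum step1
    _ = ∑' e : ℕ, ∑' m : ℕ,
        (if 1 ≤ e ∧ 1 ≤ m then (((e : ℝ≥0∞) * (m : ℝ≥0∞)) ^ 2)⁻¹ else 0) :=
        swap_divisors (fun e m => (((e : ℝ≥0∞) * (m : ℝ≥0∞)) ^ 2)⁻¹)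
    _ = (∑' e : ℕ, (if 1 ≤ e then ((e : ℝ≥0∞) ^ 2)⁻¹ else 0))
        * (∑' m : ℕ, (if 1 ≤ m then ((m : ℝ≥0∞) ^ 2)⁻¹ else 0)) := by
        have h : ∀ e m : ℕ, (if 1 ≤ e ∧ 1 ≤ m then (((e : ℝ≥0∞) * (m : ℝ≥0∞)) ^ 2)⁻¹ else 0)
            = (if 1 ≤ e then ((e : ℝ≥0∞) ^ 2)⁻¹ else 0)
              * (if 1 ≤ m then ((m : ℝ≥0∞) ^ 2)⁻¹ else 0) := by
          intro e m
          by_cases he : 1 ≤ e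
          · by_cases hm : 1 ≤ m
            · rw [if_pos ⟨he, hm⟩, if_pos he, if_pos hm, mul_pow, ENNReal.mul_inv]
              · exact Or.inl (by positivity)
              · exact Or.inl (by simp)
            · rw [if_neg (by tauto), if_neg hm, mul_zero]
          · rw [if_neg (by tauto), if_neg he, zero_mul]
        rw [tsum_congr (fun e => tsum_congr (fun m => h e m))]
        rw [tsum_congr (fun e => ENNReal.tsum_mul_left), ENNReal.tsum_mul_right]
    _ ≤ ENNReal.ofReal 4 * ENNReal.ofReal 4 := mul_le_mul' sum_one_div_sq sum_one_div_sq
    _ = ENNReal.ofReal 16 := by rw [← ENNReal.ofReal_mul (by norm_num)]; norm_num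

/-- Main estimate, `ℝ≥0∞` version. -/
lemma main_ennreal {x : ℝ} (hx : 1 ≤ x) :
    ∑' n : ℕ, (if x < (n : ℝ) then ((n : ℝ≥0∞) * n.totient)⁻¹ else 0)
      ≤ ENNReal.ofReal (32 / x) := by
  classical
  have hx0 : (0:ℝ) < x := lt_of_lt_of_le one_pos hx
  set H : ℕ → ℕ → ℝ≥0∞ := fun d m =>
    if x < ((d * m : ℕ) : ℝ) then ((d.totient : ℝ≥0∞) * ((d * m : ℕ) : ℝ≥0∞) ^ 2)⁻¹ else 0
    with hH
  have step1 : ∀ n : ℕ, (if x < (n : ℝ) then ((n : ℝ≥0∞) * n.totient)⁻¹ else 0)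
      ≤ ∑ d ∈ n.divisors, H d (n / d) := by
    intro n
    by_cases hxn : x < (n : ℝ)
    · have hn0 : n ≠ 0 := by
        rintro rfl; simp only [Nat.cast_zero] at hxn; linarith
      have hterm : ∀ d ∈ n.divisors, H d (n / d)
          = ((d.totient : ℝ≥0∞) * (n : ℝ≥0∞) ^ 2)⁻¹ := by
        intro d hd
        have hdn : d * (n / d) = n := Nat.mul_div_cancel' (Nat.mem_divisors.mp hd).1
        rw [hH]
        simp only [hdn, if_pos hxn]
      rw [if_pos hxn, Finset.sum_congr rfl hterm]
      exact key hn0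
    · rw [if_neg hxn]
      exact zero_le
  calc ∑' n : ℕ, (if x < (n : ℝ) then ((n : ℝ≥0∞) * n.totient)⁻¹ else 0)
      ≤ ∑' n : ℕ, ∑ d ∈ n.divisors, H d (n / d) := ENNReal.tsum_le_tsum step1
    _ = ∑' d : ℕ, ∑' m : ℕ, (if 1 ≤ d ∧ 1 ≤ m then H d m else 0) := swap_divisors H
    _ ≤ ∑' d : ℕ, (if 1 ≤ d then ENNReal.ofReal (2 / x) * ((d : ℝ≥0∞) * d.totient)⁻¹ else 0) := by
        refine ENNReal.tsum_le_tsum fun d => ?_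
        by_cases hd : 1 ≤ d
        · simp only [hd, true_and, if_pos]
          have hd0 : d ≠ 0 := by omega
          have hdR : (0:ℝ) < d := by exact_mod_cast Nat.pos_of_ne_zero hd0
          have hφd0 : d.totient ≠ 0 := (Nat.totient_pos.2 (Nat.pos_of_ne_zero hd0)).ne'
          have h0 : ∀ m : ℕ, (if 1 ≤ m then H d m else 0) = H d m := by
            intro m
            rcases Nat.eq_zero_or_pos m with rfl | hm
            · rw [if_neg (by omega), hH]
              simp only [Nat.mul_zero, Nat.cast_zero]
              rw [if_neg (by linarith)]
            · exact if_pos hm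
          have h1 : ∀ m : ℕ, H d m
              = ((d.totient : ℝ≥0∞) * (d : ℝ≥0∞) ^ 2)⁻¹
                * (if x / (d : ℝ) < (m : ℝ) then ((m : ℝ≥0∞) ^ 2)⁻¹ else 0) := by
            intro m
            have hcond : (x < ((d * m : ℕ) : ℝ)) ↔ (x / (d : ℝ) < (m : ℝ)) := by
              rw [div_lt_iff₀ hdR, Nat.cast_mul]
              constructor <;> intro h <;> nlinarith
            by_cases hc : x < ((d * m : ℕ) : ℝ)
            · have hm0 : m ≠ 0 := by
                rintro rfl; simp only [Nat.mul_zero, Nat.cast_zero] at hc; linarith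
              rw [hH]
              simp only [if_pos hc, if_pos (hcond.1 hc)]
              rw [Nat.cast_mul, mul_pow, ← mul_assoc, ENNReal.mul_inv]
              · exact Or.inr (by
                  exact ENNReal.pow_ne_top (ENNReal.natCast_ne_top m))
              · exact Or.inl (ENNReal.mul_ne_top (ENNReal.natCast_ne_top _)
                  (ENNReal.pow_ne_top (ENNReal.natCast_ne_top _)))
            · rw [hH]
              simp only [if_neg hc, if_neg (fun h => hc (hcond.2 h)), mul_zero]
          rw [tsum_congr (fun m => (h0 m).trans (h1 m)), ENNReal.tsum_mul_left]
          refine le_trans (mul_le_mul_right (tail_bound (by positivity)) _) ?_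
          have h2 : (2 / (x / (d : ℝ))) = (2 / x) * d := by field_simp
          rw [h2, ENNReal.ofReal_mul (by positivity), ENNReal.ofReal_natCast]
          have hEq : ((d.totient : ℝ≥0∞) * (d : ℝ≥0∞) ^ 2)⁻¹ * (d : ℝ≥0∞)
              = ((d : ℝ≥0∞) * d.totient)⁻¹ := by
            have hr : ((d.totient : ℝ≥0∞) * (d : ℝ≥0∞) ^ 2)
                = ((d : ℝ≥0∞) * d.totient) * (d : ℝ≥0∞) := by ring
            rw [hr, ENNReal.mul_inv (Or.inr (ENNReal.natCast_ne_top _))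
              (Or.inr (by exact_mod_cast hd0)), mul_assoc,
              ENNReal.inv_mul_cancel (by exact_mod_cast hd0) (ENNReal.natCast_ne_top _),
              mul_one]
          refine le_of_eq ?_
          calc ((d.totient : ℝ≥0∞) * (d : ℝ≥0∞) ^ 2)⁻¹ * (ENNReal.ofReal (2 / x) * (d : ℝ≥0∞))
              = ENNReal.ofReal (2 / x)
                * (((d.totient : ℝ≥0∞) * (d : ℝ≥0∞) ^ 2)⁻¹ * (d : ℝ≥0∞)) := by ring
            _ = ENNReal.ofReal (2 / x) * ((d : ℝ≥0∞) * d.totient)⁻¹ := by rw [hEq]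
        · simp [hd]
    _ = ENNReal.ofReal (2 / x)
        * ∑' d : ℕ, (if 1 ≤ d then ((d : ℝ≥0∞) * d.totient)⁻¹ else 0) := by
        rw [← ENNReal.tsum_mul_left]
        exact tsum_congr fun d => by
          by_cases hd : 1 ≤ d <;> simp [hd]
    _ ≤ ENNReal.ofReal (2 / x) * ENNReal.ofReal 16 :=
        mul_le_mul_right sum_inv_mul_totient _
    _ = ENNReal.ofReal (32 / x) := by
        rw [← ENNReal.ofReal_mul (by positivity)]
        congr 1
        field_simp
        ring

end Stmt4Aux

/-- There is an absolute constant `C` such that for all real `x ≥ 1`,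
`Σ_{r > x} 1/(r·φ(r)) ≤ C/x`. -/
theorem stmt4 :
    ∃ C : ℝ, ∀ x : ℝ, 1 ≤ x →
      Summable (fun r : ℕ => if x < (r : ℝ) then 1 / ((r : ℝ) * (Nat.totient r : ℝ)) else 0) ∧
      (∑' r : ℕ, if x < (r : ℝ) then 1 / ((r : ℝ) * (Nat.totient r : ℝ)) else 0) ≤ C / x := by
  classical
  refine ⟨32, fun x hx => ?_⟩
  have hx0 : (0:ℝ) < x := lt_of_lt_of_le one_pos hx
  set F : ℕ → ℝ≥0∞ := fun n => if x < (n : ℝ) then ((n : ℝ≥0∞) * n.totient)⁻¹ else 0 with hF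
  have hmain : ∑' n, F n ≤ ENNReal.ofReal (32 / x) := Stmt4Aux.main_ennreal hx
  have hne : ∀ n, F n ≠ ⊤ := by
    intro n
    by_cases h : x < (n : ℝ)
    · have hn0 : n ≠ 0 := by rintro rfl; simp only [Nat.cast_zero] at h; linarith
      have hφ0 : n.totient ≠ 0 := (Nat.totient_pos.2 (Nat.pos_of_ne_zero hn0)).ne'
      rw [hF]
      simp only [if_pos h]
      exact ENNReal.inv_ne_top.2 (mul_ne_zero (by exact_mod_cast hn0) (by exact_mod_cast hφ0))
    · rw [hF]; simp [h]
  have htop : ∑' n, F n ≠ ⊤ := ne_top_of_le_ne_top ENNReal.ofReal_ne_top hmain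
  have heq : (fun r : ℕ => if x < (r : ℝ) then 1 / ((r : ℝ) * (Nat.totient r : ℝ)) else 0)
      = fun r => (F r).toReal := by
    funext r
    by_cases h : x < (r : ℝ)
    · rw [hF]
      simp only [if_pos h]
      rw [ENNReal.toReal_inv, ENNReal.toReal_mul, ENNReal.toReal_natCast,
        ENNReal.toReal_natCast, one_div]
    · rw [hF]; simp [h]
  constructor
  · rw [heq]
    exact ENNReal.summable_toReal htop
  · rw [heq, ← ENNReal.tsum_toReal_eq hne]
    exact ENNReal.toReal_le_of_le_ofReal (by positivity) hmain
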